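/- Fix s_0 ∈ [0,3], s_1 ∈ [0, 2n-1], s_2 ∈ [0, 2n^2 - 1], and define C_L = {x ∈ {0,1}^n : wt(x) ≡ s_0 (mod 4), Σ_i i·x_i ≡ s_1 (mod 2n), Σ_i i^2·x_i' ≡ s_2 (mod 2n^2)} to be the single-deletion single-substitution list-size-two code of Song et al. (here the second-order VT syndrome VT^2(x) = Σ_{i=1}^n Σ_{j=1}^i j·x_i). If x, y ∈ C_L are distinct and x(d_x, e_x) = y(d_y, e_y) for some deletion positions d_x, d_y and substitution positions e_x, e_y, then both e_x and e_y lie in the interval between d_x and d_y, i.e., e_x, e_y ∈ [min(d_x,d_y), max(d_x,d_y)]. -/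

import Mathlib

/-- First-order VT syndrome `Σ_{i=1}^n i·x_i` (lists being 0-indexed). -/
def vtSyn (x : List Bool) : ℕ :=
  (Finset.range x.length).sum (fun i => (i + 1) * (if x.getD i false then 1 else 0))

/-- Second-order VT syndrome `VT²(x) = Σ_{i=1}^n Σ_{j=1}^i j · x_i = Σ_i (i(i+1)/2)·x_i`. -/
def vtSyn2 (x : List Bool) : ℕ :=
  (Finset.range x.length).sum
    (fun i => ((i + 1) * (i + 2) / 2) * (if x.getD i false then 1 else 0))

/-- `x(d,e)`: the result of substituting position `e` (flipping it) and deleting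
position `d` in `x` (0-indexed; the order of the two operations is immaterial). -/
def delSub (x : List Bool) (d e : ℕ) : List Bool :=
  (x.set e (!(x.getD e false))).eraseIdx d

open Finset

namespace Stmt17Aux

def tz (i : ℕ) : ℤ := ((i+1)*(i+2)/2 : ℕ)

lemma two_tz (i : ℕ) : 2 * tz i = ((i:ℤ)+1)*((i:ℤ)+2) := by
  have h : 2 * ((i+1)*(i+2)/2) = (i+1)*(i+2) := by
    refine Nat.two_mul_div_two_of_even ?_
    have := Nat.even_mul_succ_self (i+1)
    simpa [mul_comm] using this
  unfold tz
  calc (2:ℤ) * ((i+1)*(i+2)/2 : ℕ) = ((2 * ((i+1)*(i+2)/2) : ℕ) : ℤ) := by push_cast; ring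
  _ = (((i+1)*(i+2) : ℕ) : ℤ) := by rw [h]
  _ = _ := by push_cast; ring

lemma tz_mono {i j : ℕ} (h : i ≤ j) : tz i ≤ tz j := by
  have h1 := two_tz i
  have h2 := two_tz j
  have hc : (i:ℤ) ≤ j := by exact_mod_cast h
  have hp : 0 ≤ ((j:ℤ) - i) * ((i:ℤ) + (j:ℤ) + 3) :=
    mul_nonneg (by linarith) (by linarith [Int.natCast_nonneg i, Int.natCast_nonneg j])
  linarith [hp]

lemma tz_pos (i : ℕ) : 1 ≤ tz i := by
  have h1 := two_tz i
  have hp : 0 ≤ (i:ℤ) * (i:ℤ) := mul_nonneg (Int.natCast_nonneg i) (Int.natCast_nonneg i)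
  linarith [hp, Int.natCast_nonneg i]

lemma count_cast (l : List Bool) :
    (l.count true : ℤ) = ∑ i ∈ range l.length, (if l.getD i false then (1:ℤ) else 0) := by
  induction l with
  | nil => simp
  | cons b t ih =>
    rw [List.count_cons]
    simp only [List.length_cons]
    rw [Finset.sum_range_succ']
    simp only [List.getD_cons_succ, List.getD_cons_zero]
    push_cast
    rw [← ih]
    by_cases hb : b = true <;> simp [hb]

lemma vtSyn_cast (l : List Bool) :
    (vtSyn l : ℤ) = ∑ i ∈ range l.length, ((i:ℤ)+1) * (if l.getD i false then (1:ℤ) else 0) := by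
  rw [vtSyn]
  push_cast
  apply Finset.sum_congr rfl
  intro i _
  by_cases hb : l.getD i false <;> simp [hb]

lemma vtSyn2_cast (l : List Bool) :
    (vtSyn2 l : ℤ) = ∑ i ∈ range l.length, tz i * (if l.getD i false then (1:ℤ) else 0) := by
  rw [vtSyn2]
  push_cast
  apply Finset.sum_congr rfl
  intro i _
  unfold tz
  by_cases hb : l.getD i false <;> simp [hb]

lemma flip_sum (w X X' : ℕ → ℤ) (n e : ℕ) (he : e < n)
    (h : ∀ i < n, X' i = if i = e then 1 - X i else X i) :
    ∑ i ∈ range n, w i * X' i = ∑ i ∈ range n, w i * X i + (1 - 2 * X e) * w e := by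
  have key : ∀ i ∈ range n,
      w i * X' i = w i * X i + (if i = e then w i * (1 - 2 * X i) else 0) := by
    intro i hi
    rw [h i (mem_range.mp hi)]
    by_cases hie : i = e <;> simp [hie] <;> ring
  rw [Finset.sum_congr rfl key, Finset.sum_add_distrib, Finset.sum_ite_eq' (range n) e
    (fun i => w i * (1 - 2 * X i))]
  simp [Finset.mem_range.mpr he]
  ring

lemma shift_sum (w g : ℕ → ℤ) (a b : ℕ) :
    ∑ i ∈ Ico a b, w i * g (i+1) = ∑ j ∈ Ico (a+1) (b+1), w (j-1) * g j := by
  rw [Finset.sum_Ico_eq_sum_range, Finset.sum_Ico_eq_sum_range]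
  have hcard : b + 1 - (a + 1) = b - a := by omega
  rw [hcard]
  apply Finset.sum_congr rfl
  intro k _
  have h1 : a + 1 + k - 1 = a + k := by omega
  have h2 : a + 1 + k = a + k + 1 := by omega
  rw [h1, h2]

lemma sum_split (w X' Y' : ℕ → ℤ) {n dx dy : ℕ} (hdd : dx ≤ dy) (hdy : dy < n)
    (h1 : ∀ i, i < dx → Y' i = X' i)
    (h2 : ∀ i, dx ≤ i → i < dy → Y' i = X' (i+1))
    (h3 : ∀ i, dy < i → i < n → Y' i = X' i) :
    ∑ i ∈ range n, w i * Y' i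
      = ∑ i ∈ range n, w i * X' i + w dy * Y' dy - w dx * X' dx
        - ∑ j ∈ Ico (dx+1) (dy+1), (w j - w (j-1)) * X' j := by
  have hsplitY : ∑ i ∈ range n, w i * Y' i
      = ∑ i ∈ Ico 0 dx, w i * X' i + ∑ j ∈ Ico (dx+1) (dy+1), w (j-1) * X' j
        + w dy * Y' dy + ∑ i ∈ Ico (dy+1) n, w i * X' i := by
    rw [Finset.range_eq_Ico,
      ← Finset.sum_Ico_consecutive (fun i => w i * Y' i) (Nat.zero_le dx) (by omega : dx ≤ n),
      ← Finset.sum_Ico_consecutive (fun i => w i * Y' i) (by omega : dx ≤ dy + 1) (by omega : dy + 1 ≤ n),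
      Finset.sum_Ico_succ_top hdd]
    have e1 : ∑ i ∈ Ico 0 dx, w i * Y' i = ∑ i ∈ Ico 0 dx, w i * X' i :=
      Finset.sum_congr rfl (fun i hi => by rw [h1 i (Finset.mem_Ico.mp hi).2])
    have e2 : ∑ i ∈ Ico dx dy, w i * Y' i = ∑ i ∈ Ico dx dy, w i * X' (i+1) :=
      Finset.sum_congr rfl (fun i hi => by
        obtain ⟨ha, hb⟩ := Finset.mem_Ico.mp hi; rw [h2 i ha hb])
    have e3 : ∑ i ∈ Ico (dy+1) n, w i * Y' i = ∑ i ∈ Ico (dy+1) n, w i * X' i :=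
      Finset.sum_congr rfl (fun i hi => by
        obtain ⟨ha, hb⟩ := Finset.mem_Ico.mp hi; rw [h3 i (by omega) hb])
    rw [e1, e2, e3, shift_sum]
    ring
  have hsplitX : ∑ i ∈ range n, w i * X' i
      = ∑ i ∈ Ico 0 dx, w i * X' i + w dx * X' dx + ∑ j ∈ Ico (dx+1) (dy+1), w j * X' j
        + ∑ i ∈ Ico (dy+1) n, w i * X' i := by
    rw [Finset.range_eq_Ico,
      ← Finset.sum_Ico_consecutive (fun i => w i * X' i) (Nat.zero_le dx) (by omega : dx ≤ n),
      ← Finset.sum_Ico_consecutive (fun i => w i * X' i) (by omega : dx ≤ dy + 1) (by omega : dy + 1 ≤ n),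
      Finset.sum_eq_sum_Ico_succ_bot (by omega : dx < dy + 1) (fun i => w i * X' i)]
    ring
  have hdiff : ∑ j ∈ Ico (dx+1) (dy+1), (w j - w (j-1)) * X' j
      = ∑ j ∈ Ico (dx+1) (dy+1), w j * X' j - ∑ j ∈ Ico (dx+1) (dy+1), w (j-1) * X' j := by
    rw [← Finset.sum_sub_distrib]
    apply Finset.sum_congr rfl
    intro j _
    ring
  rw [hsplitY, hsplitX, hdiff]
  ring

lemma sum_split0 (X' Y' : ℕ → ℤ) {n dx dy : ℕ} (hdd : dx ≤ dy) (hdy : dy < n)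
    (h1 : ∀ i, i < dx → Y' i = X' i)
    (h2 : ∀ i, dx ≤ i → i < dy → Y' i = X' (i+1))
    (h3 : ∀ i, dy < i → i < n → Y' i = X' i) :
    ∑ i ∈ range n, Y' i = ∑ i ∈ range n, X' i + Y' dy - X' dx := by
  have h := sum_split (fun _ => (1:ℤ)) X' Y' hdd hdy h1 h2 h3
  simpa using h

lemma sum_split1 (X' Y' : ℕ → ℤ) {n dx dy : ℕ} (hdd : dx ≤ dy) (hdy : dy < n)
    (h1 : ∀ i, i < dx → Y' i = X' i)
    (h2 : ∀ i, dx ≤ i → i < dy → Y' i = X' (i+1))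
    (h3 : ∀ i, dy < i → i < n → Y' i = X' i) :
    ∑ i ∈ range n, ((i:ℤ)+1) * Y' i
      = ∑ i ∈ range n, ((i:ℤ)+1) * X' i + ((dy:ℤ)+1) * Y' dy - ((dx:ℤ)+1) * X' dx
        - ∑ j ∈ Ico (dx+1) (dy+1), X' j := by
  have h := sum_split (fun i => ((i:ℤ)+1)) X' Y' hdd hdy h1 h2 h3
  have hc : ∑ j ∈ Ico (dx+1) (dy+1), (((j:ℤ)+1) - (((j-1:ℕ):ℤ)+1)) * X' j
      = ∑ j ∈ Ico (dx+1) (dy+1), X' j := by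
    apply Finset.sum_congr rfl
    intro j hj
    have hj1 : 1 ≤ j := by have := (Finset.mem_Ico.mp hj).1; omega
    have hcc : (((j:ℤ)+1) - (((j-1:ℕ):ℤ)+1)) = 1 := by omega
    rw [hcc, one_mul]
  rw [hc] at h
  exact h

lemma sum_splitT (X' Y' : ℕ → ℤ) {n dx dy : ℕ} (hdd : dx ≤ dy) (hdy : dy < n)
    (h1 : ∀ i, i < dx → Y' i = X' i)
    (h2 : ∀ i, dx ≤ i → i < dy → Y' i = X' (i+1))
    (h3 : ∀ i, dy < i → i < n → Y' i = X' i) :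
    ∑ i ∈ range n, tz i * Y' i
      = ∑ i ∈ range n, tz i * X' i + tz dy * Y' dy - tz dx * X' dx
        - ∑ j ∈ Ico (dx+1) (dy+1), ((j:ℤ)+1) * X' j := by
  have h := sum_split tz X' Y' hdd hdy h1 h2 h3
  have hc : ∑ j ∈ Ico (dx+1) (dy+1), (tz j - tz (j-1)) * X' j
      = ∑ j ∈ Ico (dx+1) (dy+1), ((j:ℤ)+1) * X' j := by
    apply Finset.sum_congr rfl
    intro j hj
    have hj1 : 1 ≤ j := by have := (Finset.mem_Ico.mp hj).1; omega
    have h1' := two_tz j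
    have h2' := two_tz (j-1)
    have hcast : ((j-1:ℕ):ℤ) = (j:ℤ) - 1 := by omega
    rw [hcast] at h2'
    have : tz j - tz (j-1) = (j:ℤ)+1 := by nlinarith [h1', h2']
    rw [this]
  rw [hc] at h
  exact h

lemma sumBound (g : ℕ → ℤ) (hg : ∀ j, 0 ≤ g j ∧ g j ≤ 1) (c d : ℕ) (hcd : c ≤ d) :
    0 ≤ ∑ j ∈ Ico c d, g j ∧ (∑ j ∈ Ico c d, g j) ≤ (d:ℤ) - (c:ℤ) ∧
    2*(c:ℤ)*(∑ j ∈ Ico c d, g j) + (∑ j ∈ Ico c d, g j)^2 + (∑ j ∈ Ico c d, g j)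
      ≤ 2 * ∑ j ∈ Ico c d, ((j:ℤ)+1) * g j ∧
    2 * ∑ j ∈ Ico c d, ((j:ℤ)+1) * g j
      ≤ 2*(d:ℤ)*(∑ j ∈ Ico c d, g j) - (∑ j ∈ Ico c d, g j)^2 + (∑ j ∈ Ico c d, g j) := by
  induction d, hcd using Nat.le_induction with
  | base => simp
  | succ d hcd ih =>
    obtain ⟨h0, h1, h2, h3⟩ := ih
    obtain ⟨hg0, hg1⟩ := hg d
    rw [Finset.sum_Ico_succ_top hcd, Finset.sum_Ico_succ_top hcd]
    push_cast
    refine ⟨by linarith, by linarith,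
      by linarith [mul_nonneg hg0 (by linarith : (0:ℤ) ≤ (d:ℤ) - c - ∑ j ∈ Ico c d, g j),
        mul_nonneg hg0 (by linarith : (0:ℤ) ≤ 1 - g d)],
      by linarith [mul_nonneg h0 (by linarith : (0:ℤ) ≤ 1 - g d),
        mul_nonneg hg0 (by linarith : (0:ℤ) ≤ 1 - g d)]⟩

lemma final_ineq (dx dy ex ey S U : ℤ) (f a : ℤ)
    (hf : f = 1 ∨ f = -1) (ha : a = 0 ∨ a = 1)
    (hdd : dx ≤ dy) (hne : ex ≠ ey)
    (hS0 : 0 ≤ S) (hS1 : S ≤ dy - dx)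
    (hA1 : 2*S*(dx+1) + S*S + S ≤ 2*U)
    (hA2 : 2*U ≤ 2*S*(dy+1) - S*S + S)
    (hE1 : f*(ex-ey) + a*(dy-dx) - S = 0)
    (hE2 : f*((ex+1)*(ex+2) - (ey+1)*(ey+2)) + a*((dy+1)*(dy+2) - (dx+1)*(dx+2)) - 2*U = 0) :
    dx ≤ ex ∧ ex ≤ dy ∧ dx ≤ ey ∧ ey ≤ dy := by
  rcases hf with hf | hf <;> rcases ha with ha | ha <;> subst hf <;> subst ha <;>
    simp only [one_mul, zero_mul, neg_mul, mul_one, mul_zero] at hE1 hE2 ⊢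
  · -- f = 1, a = 0 : S = ex - ey, ey < ex
    have hS : S = ex - ey := by omega
    subst hS
    have hlt : ey < ex := by omega
    have h1 : dx ≤ ey := by
      by_contra hc
      push_neg at hc
      linarith [mul_pos (show (0:ℤ) < ex - ey by omega) (show (0:ℤ) < dx - ey by omega)]
    have h2 : ex ≤ dy := by
      by_contra hc
      push_neg at hc
      linarith [mul_pos (show (0:ℤ) < ex - ey by omega) (show (0:ℤ) < ex - dy by omega)]
    exact ⟨by omega, h2, h1, by omega⟩
  · -- f = 1, a = 1 : S = (ex-ey) + (dy-dx), ex < ey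
    have hS : S = ex - ey + (dy - dx) := by omega
    subst hS
    have hlt : ex < ey := by omega
    have h1 : dx ≤ ex := by
      by_contra hc
      push_neg at hc
      linarith [mul_pos (show (0:ℤ) < ey - ex by omega) (show (0:ℤ) < dx - ex by omega)]
    have h2 : ey ≤ dy := by
      by_contra hc
      push_neg at hc
      linarith [mul_pos (show (0:ℤ) < ey - ex by omega) (show (0:ℤ) < ey - dy by omega)]
    exact ⟨h1, by omega, by omega, h2⟩
  · -- f = -1, a = 0 : S = ey - ex, ex < ey
    have hS : S = ey - ex := by omega
    subst hS
    have hlt : ex < ey := by omega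
    have h1 : dx ≤ ex := by
      by_contra hc
      push_neg at hc
      linarith [mul_pos (show (0:ℤ) < ey - ex by omega) (show (0:ℤ) < dx - ex by omega)]
    have h2 : ey ≤ dy := by
      by_contra hc
      push_neg at hc
      linarith [mul_pos (show (0:ℤ) < ey - ex by omega) (show (0:ℤ) < ey - dy by omega)]
    exact ⟨h1, by omega, by omega, h2⟩
  · -- f = -1, a = 1 : S = (ey-ex)+(dy-dx), ey < ex
    have hS : S = ey - ex + (dy - dx) := by omega
    subst hS
    have hlt : ey < ex := by omega
    have h1 : dx ≤ ey := by
      by_contra hc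
      push_neg at hc
      linarith [mul_pos (show (0:ℤ) < ex - ey by omega) (show (0:ℤ) < dx - ey by omega)]
    have h2 : ex ≤ dy := by
      by_contra hc
      push_neg at hc
      linarith [mul_pos (show (0:ℤ) < ex - ey by omega) (show (0:ℤ) < ex - dy by omega)]
    exact ⟨by omega, h2, h1, by omega⟩

lemma getD_eraseIdx' (l : List Bool) (d j : ℕ) (hd : d < l.length) (hj : j < l.length - 1) :
    (l.eraseIdx d).getD j false = if j < d then l.getD j false else l.getD (j+1) false := by
  have hlen : (l.eraseIdx d).length = l.length - 1 := by
    rw [List.length_eraseIdx]; simp [hd]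
  have hj' : j < (l.eraseIdx d).length := by omega
  rw [List.getD_eq_getElem _ _ hj', List.getElem_eraseIdx]
  split_ifs with h
  · exact (List.getD_eq_getElem _ _ (by omega)).symm
  · exact (List.getD_eq_getElem _ _ (by omega)).symm

lemma getD_set_flip (l : List Bool) (e i : ℕ) (hi : i < l.length) (he : e < l.length) :
    (l.set e (!(l.getD e false))).getD i false
      = if i = e then !(l.getD i false) else l.getD i false := by
  have hlen : (l.set e (!(l.getD e false))).length = l.length := List.length_set
  rw [List.getD_eq_getElem _ _ (by omega), List.getElem_set]
  by_cases h : i = e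
  · subst h
    rw [if_pos rfl, if_pos rfl]
  · rw [if_neg (Ne.symm h), if_neg h]
    exact (List.getD_eq_getElem _ _ hi).symm


set_option maxHeartbeats 1600000 in
lemma funKey (n dx dy ex ey : ℕ) (X Y X' Y' : ℕ → ℤ)
    (hdx : dx < n) (hdy : dy < n) (hex : ex < n) (hey : ey < n) (hdd : dx ≤ dy)
    (hX : ∀ i, X i = 0 ∨ X i = 1) (hY : ∀ i, Y i = 0 ∨ Y i = 1)
    (hX' : ∀ i, X' i = 0 ∨ X' i = 1) (hY' : ∀ i, Y' i = 0 ∨ Y' i = 1)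
    (hflipX : ∀ i < n, X' i = if i = ex then 1 - X i else X i)
    (hflipY : ∀ i < n, Y' i = if i = ey then 1 - Y i else Y i)
    (hr1 : ∀ i, i < dx → Y' i = X' i)
    (hr2 : ∀ i, dx ≤ i → i < dy → Y' i = X' (i+1))
    (hr3 : ∀ i, dy < i → i < n → Y' i = X' i)
    (hd0 : (4:ℤ) ∣ (∑ i ∈ range n, Y i) - ∑ i ∈ range n, X i)
    (hd1 : (2*(n:ℤ)) ∣ (∑ i ∈ range n, ((i:ℤ)+1) * Y i) - ∑ i ∈ range n, ((i:ℤ)+1) * X i)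
    (hd2 : (2*(n:ℤ)^2) ∣ (∑ i ∈ range n, tz i * Y i) - ∑ i ∈ range n, tz i * X i) :
    (dx ≤ ex ∧ ex ≤ dy ∧ dx ≤ ey ∧ ey ≤ dy) ∨ (∀ i < n, X i = Y i) := by
  have hX'01 : ∀ j, 0 ≤ X' j ∧ X' j ≤ 1 := fun j => by
    rcases hX' j with h | h <;> rw [h] <;> norm_num
  have e0 := sum_split0 X' Y' hdd hdy hr1 hr2 hr3
  have e1 := sum_split1 X' Y' hdd hdy hr1 hr2 hr3
  have e2 := sum_splitT X' Y' hdd hdy hr1 hr2 hr3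
  have f0x := flip_sum (fun _ => (1:ℤ)) X X' n ex hex hflipX
  have f0y := flip_sum (fun _ => (1:ℤ)) Y Y' n ey hey hflipY
  have f1x := flip_sum (fun i => ((i:ℤ)+1)) X X' n ex hex hflipX
  have f1y := flip_sum (fun i => ((i:ℤ)+1)) Y Y' n ey hey hflipY
  have f2x := flip_sum tz X X' n ex hex hflipX
  have f2y := flip_sum tz Y Y' n ey hey hflipY
  simp only [mul_one, one_mul] at f0x f0y
  obtain ⟨hS0, hS1, hA1, hA2⟩ := sumBound X' hX'01 (dx+1) (dy+1) (by omega)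
  push_cast at hS1 hA1 hA2
  -- opacify the six atoms
  obtain ⟨U, hUd⟩ : ∃ v, ∑ j ∈ Ico (dx+1) (dy+1), ((j:ℤ)+1) * X' j = v := ⟨_, rfl⟩
  rw [hUd] at e2 hA1 hA2
  obtain ⟨S, hSd⟩ : ∃ v, ∑ j ∈ Ico (dx+1) (dy+1), X' j = v := ⟨_, rfl⟩
  rw [hSd] at e1 hS0 hS1 hA1 hA2
  obtain ⟨aa, had⟩ : ∃ v, X' dx = v := ⟨_, rfl⟩
  obtain ⟨bb, hbd⟩ : ∃ v, Y' dy = v := ⟨_, rfl⟩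
  rw [had, hbd] at e0 e1 e2
  obtain ⟨fx, hfxd⟩ : ∃ v, (1:ℤ) - 2 * X ex = v := ⟨_, rfl⟩
  rw [hfxd] at f0x f1x f2x
  obtain ⟨fy, hfyd⟩ : ∃ v, (1:ℤ) - 2 * Y ey = v := ⟨_, rfl⟩
  rw [hfyd] at f0y f1y f2y
  have hfx : fx = 1 ∨ fx = -1 := by
    rcases hX ex with h | h <;> rw [← hfxd, h] <;> norm_num
  have hfy : fy = 1 ∨ fy = -1 := by
    rcases hY ey with h | h <;> rw [← hfyd, h] <;> norm_num
  have ha01 : aa = 0 ∨ aa = 1 := by rw [← had]; exact hX' dx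
  have hb01 : bb = 0 ∨ bb = 1 := by rw [← hbd]; exact hY' dy
  -- difference identities
  have hD0 : (∑ i ∈ range n, Y i) - (∑ i ∈ range n, X i) = fx - fy + bb - aa := by
    linear_combination e0 + f0x - f0y
  have hD1 : (∑ i ∈ range n, ((i:ℤ)+1) * Y i) - (∑ i ∈ range n, ((i:ℤ)+1) * X i)
      = fx * ((ex:ℤ)+1) - fy * ((ey:ℤ)+1) + ((dy:ℤ)+1) * bb - ((dx:ℤ)+1) * aa - S := by
    linear_combination e1 + f1x - f1y
  have hD2 : (∑ i ∈ range n, tz i * Y i) - (∑ i ∈ range n, tz i * X i)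
      = fx * tz ex - fy * tz ey + tz dy * bb - tz dx * aa - U := by
    linear_combination e2 + f2x - f2y
  rw [hD0] at hd0
  rw [hD1] at hd1
  rw [hD2] at hd2
  -- weight: fx = fy and aa = bb
  have hfab : fx = fy ∧ aa = bb := by
    rcases hfx with hf1 | hf1 <;> rcases hfy with hf2 | hf2 <;>
      rcases ha01 with ha1 | ha1 <;> rcases hb01 with hb1 | hb1 <;>
      subst hf1 <;> subst hf2 <;> subst ha1 <;> subst hb1 <;> omega
  obtain ⟨hffe, habe⟩ := hfab
  -- useful casts
  have hnz : 1 ≤ (n:ℤ) := by exact_mod_cast (by omega : 1 ≤ n)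
  have hexz : (ex:ℤ) < n := by exact_mod_cast hex
  have heyz : (ey:ℤ) < n := by exact_mod_cast hey
  have hdxz : (dx:ℤ) < n := by exact_mod_cast hdx
  have hdyz : (dy:ℤ) < n := by exact_mod_cast hdy
  have hddz : (dx:ℤ) ≤ dy := by exact_mod_cast hdd
  have hex0 : (0:ℤ) ≤ ex := Int.natCast_nonneg ex
  have hey0 : (0:ℤ) ≤ ey := Int.natCast_nonneg ey
  have hdx0 : (0:ℤ) ≤ dx := Int.natCast_nonneg dx
  -- E1
  have hd1' : (2*(n:ℤ)) ∣ fx * ((ex:ℤ) - ey) + aa * ((dy:ℤ) - dx) - S := by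
    have hrw : fx * ((ex:ℤ)+1) - fy * ((ey:ℤ)+1) + ((dy:ℤ)+1) * bb - ((dx:ℤ)+1) * aa - S
        = fx * ((ex:ℤ) - ey) + aa * ((dy:ℤ) - dx) - S := by
      rw [← hffe, ← habe]; ring
    rwa [hrw] at hd1
  have hE1 : fx * ((ex:ℤ) - ey) + aa * ((dy:ℤ) - dx) - S = 0 := by
    refine Int.eq_zero_of_abs_lt_dvd hd1' ?_
    rw [abs_lt]
    rcases hfx with hf1 | hf1 <;> rcases ha01 with ha1 | ha1 <;> subst hf1 <;> subst ha1 <;>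
      constructor <;> linarith
  -- bounds on U
  have hU0 : 0 ≤ U := by
    linarith [hA1, sq_nonneg S, mul_nonneg (show (0:ℤ) ≤ (dx:ℤ)+1 by linarith) hS0]
  have hUub : 2 * U ≤ 2 * (tz dy - tz dx) := by
    have h1' := two_tz dx
    have h2' := two_tz dy
    have hprod : 0 ≤ ((dy:ℤ) - dx - S) * (2*(dy:ℤ) + 3 - ((dy:ℤ) - dx) - S) :=
      mul_nonneg (by linarith) (by linarith)
    linarith [hA2, h1', h2', hprod]
  -- E2
  have hd2' : (2*(n:ℤ)^2) ∣ fx * (tz ex - tz ey) + aa * (tz dy - tz dx) - U := by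
    have hrw : fx * tz ex - fy * tz ey + tz dy * bb - tz dx * aa - U
        = fx * (tz ex - tz ey) + aa * (tz dy - tz dx) - U := by
      rw [← hffe, ← habe]; ring
    rwa [hrw] at hd2
  have htzn : 2 * tz (n-1) = (n:ℤ) * ((n:ℤ)+1) := by
    have h := two_tz (n-1)
    have hc : ((n-1:ℕ):ℤ) = (n:ℤ) - 1 := by omega
    rw [hc] at h
    linarith [h]
  have htex : tz ex ≤ tz (n-1) := tz_mono (by omega)
  have htey : tz ey ≤ tz (n-1) := tz_mono (by omega)
  have htdx : tz dx ≤ tz (n-1) := tz_mono (by omega)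
  have htdy : tz dy ≤ tz (n-1) := tz_mono (by omega)
  have htdxy : tz dx ≤ tz dy := tz_mono hdd
  have hE2 : fx * (tz ex - tz ey) + aa * (tz dy - tz dx) - U = 0 := by
    refine Int.eq_zero_of_abs_lt_dvd hd2' ?_
    rw [abs_lt]
    have hp1 := tz_pos ex
    have hp2 := tz_pos ey
    have hp3 := tz_pos dx
    have hsq : (n:ℤ) ≤ (n:ℤ)^2 := by
      linarith [mul_nonneg (by linarith : (0:ℤ) ≤ (n:ℤ)-1) (by linarith : (0:ℤ) ≤ (n:ℤ))]
    have hUub2 : U ≤ tz dy - tz dx := by linarith [hUub]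
    rcases hfx with hf1 | hf1 <;> rcases ha01 with ha1 | ha1 <;> subst hf1 <;> subst ha1 <;>
      constructor <;> linarith
  by_cases hexy : ex = ey
  · -- degenerate case : X = Y on range n
    right
    subst hexy
    have hSval : S = aa * ((dy:ℤ) - dx) := by
      have : fx * ((ex:ℤ) - ex) = 0 := by ring
      linarith [hE1, this]
    have hcover : ∀ v : ℤ, (∀ j ∈ Ico (dx+1) (dy+1), X' j = v) → X' dx = v → Y' dy = v →
        ∀ i < n, Y' i = X' i := by
      intro v hIco hdxv hdyv i hi
      by_cases hc1 : i < dx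
      · exact hr1 i hc1
      · by_cases hc2 : i < dy
        · rw [hr2 i (by omega) hc2]
          have hXi1 : X' (i+1) = v := hIco (i+1) (Finset.mem_Ico.mpr ⟨by omega, by omega⟩)
          have hXi : X' i = v := by
            by_cases hc3 : i = dx
            · rw [hc3]; exact hdxv
            · exact hIco i (Finset.mem_Ico.mpr ⟨by omega, by omega⟩)
          rw [hXi1, hXi]
        · by_cases hc3 : i = dy
          · rw [hc3, hdyv]
            by_cases hc4 : dx = dy
            · rw [← hc4]; exact hdxv.symm
            · exact (hIco dy (Finset.mem_Ico.mpr ⟨by omega, by omega⟩)).symm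
          · exact hr3 i (by omega) hi
    have hYX' : ∀ i < n, Y' i = X' i := by
      rcases ha01 with ha1 | ha1
      · have hSz : ∑ j ∈ Ico (dx+1) (dy+1), X' j = 0 := by
          rw [hSd, hSval, ha1]; ring
        have hallz : ∀ j ∈ Ico (dx+1) (dy+1), X' j = 0 :=
          (Finset.sum_eq_zero_iff_of_nonneg (fun j _ => (hX'01 j).1)).mp hSz
        exact hcover 0 hallz (by rw [had]; exact ha1) (by rw [hbd, ← habe]; exact ha1)
      · have hcard : (∑ _j ∈ Ico (dx+1) (dy+1), (1:ℤ)) = ((dy:ℤ) - dx) := by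
          rw [Finset.sum_const, Nat.card_Ico]
          simp only [nsmul_eq_mul, mul_one]
          omega
        have hSz : ∑ j ∈ Ico (dx+1) (dy+1), ((1:ℤ) - X' j) = 0 := by
          rw [Finset.sum_sub_distrib, hcard, hSd, hSval, ha1]
          ring
        have hallo : ∀ j ∈ Ico (dx+1) (dy+1), (1:ℤ) - X' j = 0 :=
          (Finset.sum_eq_zero_iff_of_nonneg (fun j _ => by linarith [(hX'01 j).2])).mp hSz
        have hallo' : ∀ j ∈ Ico (dx+1) (dy+1), X' j = 1 := fun j hj => by
          linarith [hallo j hj]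
        exact hcover 1 hallo' (by rw [had]; exact ha1) (by rw [hbd, ← habe]; exact ha1)
    intro i hi
    have h1' := hflipX i hi
    have h2' := hflipY i hi
    have h3' := hYX' i hi
    by_cases hc : i = ex
    · rw [hc] at h1' h2' h3' ⊢
      simp only [if_pos rfl] at h1' h2'
      rw [h1', h2'] at h3'
      linarith
    · rw [if_neg hc] at h1' h2'
      rw [← h1', ← h2', h3']
  · -- main case
    left
    have hnez : (ex:ℤ) ≠ (ey:ℤ) := fun hcc => hexy (by exact_mod_cast hcc)
    have hE2' : fx*(((ex:ℤ)+1)*((ex:ℤ)+2) - ((ey:ℤ)+1)*((ey:ℤ)+2))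
        + aa*(((dy:ℤ)+1)*((dy:ℤ)+2) - ((dx:ℤ)+1)*((dx:ℤ)+2)) - 2*U = 0 := by
      linear_combination 2 * hE2 - fx * two_tz ex + fx * two_tz ey - aa * two_tz dy + aa * two_tz dx
    obtain ⟨g1, g2, g3, g4⟩ := final_ineq (dx:ℤ) (dy:ℤ) (ex:ℤ) (ey:ℤ) S U fx aa hfx ha01 hddz hnez
      hS0 (by linarith) (by linarith [hA1]) (by linarith [hA2]) hE1 hE2'
    exact ⟨by exact_mod_cast g1, by exact_mod_cast g2, by exact_mod_cast g3, by exact_mod_cast g4⟩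

end Stmt17Aux

open Stmt17Aux in
set_option maxHeartbeats 1600000 in
lemma stmt17_key (n : ℕ) (x y : List Bool) (hx : x.length = n) (hy : y.length = n) (hne : x ≠ y)
    (h0 : x.count true % 4 = y.count true % 4)
    (h1 : vtSyn x % (2*n) = vtSyn y % (2*n))
    (h2 : vtSyn2 x % (2*n^2) = vtSyn2 y % (2*n^2))
    (dx dy ex ey : ℕ) (hdx : dx < n) (hdy : dy < n) (hex : ex < n) (hey : ey < n)
    (hdd : dx ≤ dy)
    (heq : delSub x dx ex = delSub y dy ey) :
    dx ≤ ex ∧ ex ≤ dy ∧ dx ≤ ey ∧ ey ≤ dy := by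
  simp only [delSub] at heq
  set x' : List Bool := x.set ex (!(x.getD ex false)) with hx'def
  set y' : List Bool := y.set ey (!(y.getD ey false)) with hy'def
  have hx'len : x'.length = n := by rw [hx'def, List.length_set, hx]
  have hy'len : y'.length = n := by rw [hy'def, List.length_set, hy]
  set X : ℕ → ℤ := fun i => if x.getD i false then 1 else 0 with hXdef
  set Y : ℕ → ℤ := fun i => if y.getD i false then 1 else 0 with hYdef
  set X' : ℕ → ℤ := fun i => if x'.getD i false then 1 else 0 with hX'def2
  set Y' : ℕ → ℤ := fun i => if y'.getD i false then 1 else 0 with hY'def2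
  have hIX : ∀ i, X i = 0 ∨ X i = 1 := fun i => by
    rw [hXdef]; dsimp only; split
    · right; rfl
    · left; rfl
  have hIY : ∀ i, Y i = 0 ∨ Y i = 1 := fun i => by
    rw [hYdef]; dsimp only; split
    · right; rfl
    · left; rfl
  have hIX' : ∀ i, X' i = 0 ∨ X' i = 1 := fun i => by
    rw [hX'def2]; dsimp only; split
    · right; rfl
    · left; rfl
  have hIY' : ∀ i, Y' i = 0 ∨ Y' i = 1 := fun i => by
    rw [hY'def2]; dsimp only; split
    · right; rfl
    · left; rfl
  have hflipX : ∀ i < n, X' i = if i = ex then 1 - X i else X i := by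
    intro i hi
    have hgd := getD_set_flip x ex i (by omega) (by omega)
    rw [hX'def2, hXdef]
    dsimp only
    rw [← hx'def] at hgd
    rw [hgd]
    by_cases hie : i = ex
    · rw [if_pos hie, if_pos hie]
      cases hb : x.getD i false <;> norm_num
    · rw [if_neg hie, if_neg hie]
  have hflipY : ∀ i < n, Y' i = if i = ey then 1 - Y i else Y i := by
    intro i hi
    have hgd := getD_set_flip y ey i (by omega) (by omega)
    rw [hY'def2, hYdef]
    dsimp only
    rw [← hy'def] at hgd
    rw [hgd]
    by_cases hie : i = ey
    · rw [if_pos hie, if_pos hie]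
      cases hb : y.getD i false <;> norm_num
    · rw [if_neg hie, if_neg hie]
  have hz : ∀ j, j < n - 1 →
      (if j < dx then x'.getD j false else x'.getD (j+1) false)
        = (if j < dy then y'.getD j false else y'.getD (j+1) false) := by
    intro j hj
    have hE : (x'.eraseIdx dx).getD j false = (y'.eraseIdx dy).getD j false := by rw [heq]
    rwa [getD_eraseIdx' x' dx j (by omega) (by omega),
      getD_eraseIdx' y' dy j (by omega) (by omega)] at hE
  have hr1 : ∀ i, i < dx → Y' i = X' i := by
    intro i hi
    have h := hz i (by omega)
    rw [if_pos (by omega : i < dx), if_pos (by omega : i < dy)] at h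
    rw [hX'def2, hY'def2]
    dsimp only
    rw [h]
  have hr2 : ∀ i, dx ≤ i → i < dy → Y' i = X' (i+1) := by
    intro i ha hb
    have h := hz i (by omega)
    rw [if_neg (by omega : ¬ i < dx), if_pos (by omega : i < dy)] at h
    rw [hX'def2, hY'def2]
    dsimp only
    rw [h]
  have hr3 : ∀ i, dy < i → i < n → Y' i = X' i := by
    intro i ha hb
    have h := hz (i-1) (by omega)
    rw [if_neg (by omega : ¬ i - 1 < dx), if_neg (by omega : ¬ i - 1 < dy)] at h
    have hi1 : i - 1 + 1 = i := by omega
    rw [hi1] at h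
    rw [hX'def2, hY'def2]
    dsimp only
    rw [h]
  -- cast the syndromes
  have hcx0 : (x.count true : ℤ) = ∑ i ∈ range n, X i := by
    rw [count_cast, hx, hXdef]
  have hcy0 : (y.count true : ℤ) = ∑ i ∈ range n, Y i := by
    rw [count_cast, hy, hYdef]
  have hvx1 : (vtSyn x : ℤ) = ∑ i ∈ range n, ((i:ℤ)+1) * X i := by
    rw [vtSyn_cast, hx, hXdef]
  have hvy1 : (vtSyn y : ℤ) = ∑ i ∈ range n, ((i:ℤ)+1) * Y i := by
    rw [vtSyn_cast, hy, hYdef]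
  have hvx2 : (vtSyn2 x : ℤ) = ∑ i ∈ range n, tz i * X i := by
    rw [vtSyn2_cast, hx, hXdef]
  have hvy2 : (vtSyn2 y : ℤ) = ∑ i ∈ range n, tz i * Y i := by
    rw [vtSyn2_cast, hy, hYdef]
  have hd0 : (4:ℤ) ∣ (∑ i ∈ range n, Y i) - ∑ i ∈ range n, X i := by
    have hmod : ((x.count true : ℤ)) % 4 = ((y.count true : ℤ)) % 4 := by
      exact_mod_cast h0
    have := Int.ModEq.dvd (show Int.ModEq 4 (x.count true : ℤ) (y.count true : ℤ) from hmod)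
    rwa [hcx0, hcy0] at this
  have hd1 : (2*(n:ℤ)) ∣ (∑ i ∈ range n, ((i:ℤ)+1) * Y i) - ∑ i ∈ range n, ((i:ℤ)+1) * X i := by
    have hmod : ((vtSyn x : ℤ)) % (2*(n:ℤ)) = ((vtSyn y : ℤ)) % (2*(n:ℤ)) := by
      exact_mod_cast h1
    have := Int.ModEq.dvd (show Int.ModEq (2*(n:ℤ)) (vtSyn x : ℤ) (vtSyn y : ℤ) from hmod)
    rwa [hvx1, hvy1] at this
  have hd2 : (2*(n:ℤ)^2) ∣ (∑ i ∈ range n, tz i * Y i) - ∑ i ∈ range n, tz i * X i := by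
    have hmod : ((vtSyn2 x : ℤ)) % (2*(n:ℤ)^2) = ((vtSyn2 y : ℤ)) % (2*(n:ℤ)^2) := by
      exact_mod_cast h2
    have := Int.ModEq.dvd (show Int.ModEq (2*(n:ℤ)^2) (vtSyn2 x : ℤ) (vtSyn2 y : ℤ) from hmod)
    rwa [hvx2, hvy2] at this
  rcases funKey n dx dy ex ey X Y X' Y' hdx hdy hex hey hdd hIX hIY hIX' hIY'
    hflipX hflipY hr1 hr2 hr3 hd0 hd1 hd2 with h | hXY
  · exact h
  · exfalso
    apply hne
    have hgd : ∀ i < n, x.getD i false = y.getD i false := by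
      intro i hi
      have hxy := hXY i hi
      rw [hXdef, hYdef] at hxy
      dsimp only at hxy
      by_cases hb1 : x.getD i false = true <;> by_cases hb2 : y.getD i false = true
      · rw [hb1, hb2]
      · exfalso; rw [if_pos hb1, if_neg hb2] at hxy; norm_num at hxy
      · exfalso; rw [if_neg hb1, if_pos hb2] at hxy; norm_num at hxy
      · rw [Bool.not_eq_true] at hb1 hb2; rw [hb1, hb2]
    apply List.ext_getElem (by rw [hx, hy])
    intro i hi1 hi2
    have := hgd i (by omega)
    rwa [List.getD_eq_getElem _ _ hi1, List.getD_eq_getElem _ _ hi2] at this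

/-- For distinct codewords `x, y` of the list-decodable code `C_L` of Song et al.,
if `x(d_x, e_x) = y(d_y, e_y)` then `e_x, e_y ∈ [min(d_x,d_y), max(d_x,d_y)]`. -/
theorem stmt17 (n : ℕ) (hn : 1 ≤ n) (s0 s1 s2 : ℕ)
    (hs0 : s0 ≤ 3) (hs1 : s1 ≤ 2 * n - 1) (hs2 : s2 ≤ 2 * n ^ 2 - 1)
    (x y : List Bool) (hx : x.length = n) (hy : y.length = n) (hne : x ≠ y)
    (hx0 : x.count true % 4 = s0) (hy0 : y.count true % 4 = s0)
    (hx1 : vtSyn x % (2 * n) = s1) (hy1 : vtSyn y % (2 * n) = s1)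
    (hx2 : vtSyn2 x % (2 * n ^ 2) = s2) (hy2 : vtSyn2 y % (2 * n ^ 2) = s2)
    (dx dy ex ey : ℕ) (hdx : dx < n) (hdy : dy < n) (hex : ex < n) (hey : ey < n)
    (heq : delSub x dx ex = delSub y dy ey) :
    min dx dy ≤ ex ∧ ex ≤ max dx dy ∧ min dx dy ≤ ey ∧ ey ≤ max dx dy := by
  have h0 : x.count true % 4 = y.count true % 4 := hx0.trans hy0.symm
  have h1 : vtSyn x % (2*n) = vtSyn y % (2*n) := hx1.trans hy1.symm
  have h2 : vtSyn2 x % (2*n^2) = vtSyn2 y % (2*n^2) := hx2.trans hy2.symm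
  rcases le_total dx dy with hdd | hdd
  · obtain ⟨g1, g2, g3, g4⟩ := stmt17_key n x y hx hy hne h0 h1 h2 dx dy ex ey hdx hdy hex hey hdd heq
    omega
  · obtain ⟨g1, g2, g3, g4⟩ := stmt17_key n y x hy hx hne.symm h0.symm h1.symm h2.symm
      dy dx ey ex hdy hdx hey hex hdd heq.symm
    omega
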